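/- With notation as above, the homeomorphism Φ̂ maps the closure of ℝⁿ intersected with the domain onto (ℝ̄ × ℝ^{n-1}) intersected with the codomain: i.e., Φ̂( (closure of ℝⁿ in 𝔻_{ℂⁿ}) ∖ closure({z₁ = 0}) ) = (ℝ̄ ∖ {0}) × ℝ^{n-1}, where ℝ̄ = ℝ ⊔ {±∞} is the closure of ℝ in 𝔻_ℂ. -/

import Mathlib

open Metric Filter

noncomputable section

/-- `ℂⁿ` with the Euclidean norm. -/
abbrev Cn (n : ℕ) := EuclideanSpace ℂ (Fin n)

/-- The radial compactification `𝔻_E` of `E = ℂⁿ`, as the disjoint union of `ℂⁿ`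
and a copy `S^{2n-1}∞` of the unit sphere. -/
abbrev DE (n : ℕ) := Cn n ⊕ Metric.sphere (0 : Cn n) 1

/-- The bijection `φ : D → 𝔻_E`, `φ(z) = z/(1-|z|)` on the open ball and `φ(z) = z∞`
on the boundary sphere. -/
noncomputable def phiD (n : ℕ) : Metric.closedBall (0 : Cn n) 1 → DE n :=
  fun z =>
    if h : ‖(z : Cn n)‖ < 1 then
      Sum.inl ((1 - ‖(z : Cn n)‖)⁻¹ • (z : Cn n))
    else
      Sum.inr ⟨(z : Cn n), by
        have h1 : ‖(z : Cn n)‖ ≤ 1 := mem_closedBall_zero_iff.mp z.2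
        exact mem_sphere_zero_iff_norm.mpr (le_antisymm h1 (not_lt.mp h))⟩

/-- The topology on `𝔻_E`, transported from the closed unit ball via `φ`
(so that `φ` is a homeomorphism). -/
instance DEtop (n : ℕ) : TopologicalSpace (DE n) :=
  TopologicalSpace.coinduced (phiD n) inferInstance

/-- The radial compactification `𝔻_ℂ = ℂ ⊔ S¹∞` of `ℂ`. -/
abbrev DC := ℂ ⊕ Metric.sphere (0 : ℂ) 1

/-- The bijection from the closed unit disc to `𝔻_ℂ`. -/
noncomputable def phiDC : Metric.closedBall (0 : ℂ) 1 → DC :=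
  fun z =>
    if h : ‖(z : ℂ)‖ < 1 then
      Sum.inl ((1 - ‖(z : ℂ)‖)⁻¹ • (z : ℂ))
    else
      Sum.inr ⟨(z : ℂ), by
        have h1 : ‖(z : ℂ)‖ ≤ 1 := mem_closedBall_zero_iff.mp z.2
        exact mem_sphere_zero_iff_norm.mpr (le_antisymm h1 (not_lt.mp h))⟩

/-- The topology of `𝔻_ℂ`, transported from the closed unit disc via `phiDC`. -/
instance DCtop : TopologicalSpace DC :=
  TopologicalSpace.coinduced phiDC inferInstance

/-- The hyperplane `{z₁ = 0}` viewed inside `𝔻_{ℂⁿ}` (as a set of finite points). -/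
def Hhyp (m : ℕ) : Set (DE (m + 1)) :=
  {p | ∃ z : Cn (m + 1), z 0 = 0 ∧ p = Sum.inl z}

/-- The closure of `ℝⁿ ⊂ ℂⁿ` in `𝔻_{ℂⁿ}`. -/
def realPtsN (m : ℕ) : Set (DE (m + 1)) :=
  closure (Sum.inl '' {z : Cn (m + 1) | ∀ i, (z i).im = 0})

/-- `ℝ̄ ⊂ 𝔻_ℂ`, the closure of `ℝ ⊂ ℂ` in `𝔻_ℂ`. -/
def realPtsC : Set DC := closure (Sum.inl '' {z : ℂ | z.im = 0})

/-! ### Auxiliary machinery -/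

section Generic

variable {E : Type*} [NormedAddCommGroup E] [NormedSpace ℝ E]

/-- Generic version of `phiD`/`phiDC`. -/
noncomputable def psi (E : Type*) [NormedAddCommGroup E] [NormedSpace ℝ E] :
    Metric.closedBall (0 : E) 1 → E ⊕ Metric.sphere (0 : E) 1 :=
  fun z =>
    if h : ‖(z : E)‖ < 1 then
      Sum.inl ((1 - ‖(z : E)‖)⁻¹ • (z : E))
    else
      Sum.inr ⟨(z : E), by
        have h1 : ‖(z : E)‖ ≤ 1 := mem_closedBall_zero_iff.mp z.2
        exact mem_sphere_zero_iff_norm.mpr (le_antisymm h1 (not_lt.mp h))⟩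

lemma psi_inl_elim {z : Metric.closedBall (0 : E) 1} {v : E} (h : psi E z = Sum.inl v) :
    ‖(z : E)‖ < 1 ∧ v = (1 - ‖(z : E)‖)⁻¹ • (z : E) := by
  unfold psi at h
  split_ifs at h with hlt
  · exact ⟨hlt, (Sum.inl.injEq _ _ ▸ h).symm⟩

lemma psi_inr_elim {z : Metric.closedBall (0 : E) 1} {x : Metric.sphere (0 : E) 1}
    (h : psi E z = Sum.inr x) : ¬ (‖(z : E)‖ < 1) ∧ (x : E) = (z : E) := by
  unfold psi at h
  split_ifs at h with hlt
  refine ⟨hlt, ?_⟩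
  exact (congrArg Subtype.val (Sum.inr.injEq _ _ ▸ h)).symm

lemma psi_injective : Function.Injective (psi E) := by
  intro a b hab
  unfold psi at hab
  split_ifs at hab with ha hb hb
  · simp only [Sum.inl.injEq] at hab
    have h1a : (0:ℝ) < 1 - ‖(a:E)‖ := by linarith
    have h1b : (0:ℝ) < 1 - ‖(b:E)‖ := by linarith
    have hn : (1 - ‖(a:E)‖)⁻¹ * ‖(a:E)‖ = (1 - ‖(b:E)‖)⁻¹ * ‖(b:E)‖ := by
      have := congrArg norm hab
      rwa [norm_smul, norm_smul, Real.norm_eq_abs, Real.norm_eq_abs,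
        abs_of_nonneg (by positivity), abs_of_nonneg (by positivity)] at this
    have hAB : ‖(a:E)‖ = ‖(b:E)‖ := by
      field_simp at hn
      nlinarith [norm_nonneg (a:E), norm_nonneg (b:E)]
    rw [hAB] at hab
    have := smul_right_injective E (by positivity : (1 - ‖(b:E)‖)⁻¹ ≠ 0) hab
    exact Subtype.ext this
  · simp only [Sum.inr.injEq, Subtype.mk.injEq] at hab
    exact Subtype.ext hab

lemma psi_surj_inl (v : E) :
    psi E ⟨(1 + ‖v‖)⁻¹ • v, by
      rw [mem_closedBall_zero_iff, norm_smul, Real.norm_eq_abs,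
        abs_of_nonneg (by positivity), inv_mul_eq_div, div_le_one (by positivity)]
      linarith [norm_nonneg v]⟩ = Sum.inl v := by
  have h0 : (0:ℝ) < 1 + ‖v‖ := by positivity
  have hn : ‖(1 + ‖v‖)⁻¹ • v‖ = (1 + ‖v‖)⁻¹ * ‖v‖ := by
    rw [norm_smul, Real.norm_eq_abs, abs_of_nonneg (by positivity)]
  have hlt : ‖(1 + ‖v‖)⁻¹ • v‖ < 1 := by
    rw [hn, inv_mul_eq_div, div_lt_one (by positivity)]
    linarith
  unfold psi
  rw [dif_pos hlt]
  show Sum.inl ((1 - ‖(1 + ‖v‖)⁻¹ • v‖)⁻¹ • ((1 + ‖v‖)⁻¹ • v)) = Sum.inl v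
  rw [hn]
  have : (1 - (1 + ‖v‖)⁻¹ * ‖v‖) = (1 + ‖v‖)⁻¹ := by
    field_simp
    ring
  rw [this, inv_inv, smul_smul, mul_inv_cancel₀ (by positivity), one_smul]

lemma psi_inl_mem_image {P : Set E} (hP : ∀ (t : ℝ), ∀ w ∈ P, t • w ∈ P)
    {v : E} (hv : v ∈ P) :
    Sum.inl v ∈ psi E '' {w : Metric.closedBall (0 : E) 1 | (w : E) ∈ P} :=
  ⟨_, hP (1 + ‖v‖)⁻¹ _ hv, psi_surj_inl v⟩

lemma mem_closure_ball_inter {P : Set E}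
    (hP : ∀ (t : ℝ), ∀ w ∈ P, t • w ∈ P)
    {z : E} (hz : ‖z‖ ≤ 1) (hzP : z ∈ P) :
    z ∈ closure {w : E | ‖w‖ < 1 ∧ w ∈ P} := by
  have hc : Tendsto (fun k : ℕ => (1 - ((k:ℝ)+1)⁻¹)) atTop (nhds 1) := by
    have h := (tendsto_one_div_add_atTop_nhds_zero_nat :
      Tendsto (fun n : ℕ => 1 / ((n : ℝ) + 1)) atTop (nhds 0))
    simpa [one_div] using (tendsto_const_nhds (x := (1:ℝ)) (f := atTop)).sub h
  have ht : Tendsto (fun k : ℕ => (1 - ((k:ℝ)+1)⁻¹) • z) atTop (nhds z) := by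
    simpa using hc.smul_const z
  refine mem_closure_of_tendsto ht (Eventually.of_forall fun k => ?_)
  have hk0 : (0:ℝ) < (k:ℝ) + 1 := by positivity
  have h1 : (0:ℝ) < ((k:ℝ)+1)⁻¹ := by positivity
  have h2 : ((k:ℝ)+1)⁻¹ ≤ 1 := by
    rw [inv_le_one_iff₀]; right; linarith
  constructor
  · rw [norm_smul, Real.norm_eq_abs, abs_of_nonneg (by linarith)]
    calc (1 - ((k:ℝ)+1)⁻¹) * ‖z‖ ≤ (1 - ((k:ℝ)+1)⁻¹) * 1 := by
          apply mul_le_mul_of_nonneg_left hz; linarith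
    _ < 1 := by linarith
  · exact hP _ _ hzP

end Generic

/-! ### Lemmas about `phiD` and `phiDC` -/

lemma phiD_eq (n : ℕ) : phiD n = psi (Cn n) := rfl

lemma phiDC_eq : phiDC = psi ℂ := rfl

lemma phiD_continuous (n : ℕ) : Continuous (phiD n) := continuous_coinduced_rng

lemma phiDC_continuous : Continuous phiDC := continuous_coinduced_rng

lemma phiD_closedMap (n : ℕ) {C : Set (Metric.closedBall (0 : Cn n) 1)} (hC : IsClosed C) :
    IsClosed (phiD n '' C) := by
  rw [← isOpen_compl_iff]
  refine isOpen_coinduced.mpr ?_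
  have : phiD n ⁻¹' (phiD n '' C)ᶜ = Cᶜ := by
    rw [Set.preimage_compl, Set.preimage_image_eq C (phiD_eq n ▸ psi_injective)]
  rw [this]
  exact hC.isOpen_compl

lemma phiDC_closedMap {C : Set (Metric.closedBall (0 : ℂ) 1)} (hC : IsClosed C) :
    IsClosed (phiDC '' C) := by
  rw [← isOpen_compl_iff]
  refine isOpen_coinduced.mpr ?_
  have : phiDC ⁻¹' (phiDC '' C)ᶜ = Cᶜ := by
    rw [Set.preimage_compl, Set.preimage_image_eq C (phiDC_eq ▸ psi_injective)]
  rw [this]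
  exact hC.isOpen_compl

/-! ### Real-point predicates -/

def PNset (m : ℕ) : Set (Cn (m+1)) := {z | ∀ i, (z i).im = 0}

def PCset : Set ℂ := {z | z.im = 0}

lemma PNsmul (m : ℕ) : ∀ (t : ℝ), ∀ w ∈ PNset m, t • w ∈ PNset m := by
  intro t w hw i
  have : (t • w) i = t • (w i) := rfl
  rw [this, Complex.smul_im, hw i, smul_zero]

lemma PCsmul : ∀ (t : ℝ), ∀ w ∈ PCset, t • w ∈ PCset := by
  intro t w hw
  show (t • w).im = 0
  rw [Complex.smul_im, hw, smul_zero]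

lemma PNclosed (m : ℕ) : IsClosed (PNset m) := by
  have : PNset m = ⋂ i, {z : Cn (m+1) | (z i).im = 0} := by
    ext z; simp [PNset]
  rw [this]
  exact isClosed_iInter fun i =>
    isClosed_eq (Complex.continuous_im.comp (EuclideanSpace.proj i).continuous) continuous_const

lemma PCclosed : IsClosed PCset :=
  isClosed_eq Complex.continuous_im continuous_const

/-! ### Characterization of `realPtsN` -/

lemma realPtsN_subset (m : ℕ) :
    realPtsN m ⊆ phiD (m+1) '' {w : Metric.closedBall (0 : Cn (m+1)) 1 | (w : Cn (m+1)) ∈ PNset m} := by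
  apply closure_minimal
  · rintro _ ⟨z, hz, rfl⟩
    rw [phiD_eq]
    exact psi_inl_mem_image (PNsmul m) hz
  · exact phiD_closedMap _ ((PNclosed m).preimage continuous_subtype_val)

lemma realPtsN_cases {m : ℕ} {p : DE (m+1)} (hp : p ∈ realPtsN m) :
    (∃ z, z ∈ PNset m ∧ p = Sum.inl z) ∨
    (∃ x : Metric.sphere (0 : Cn (m+1)) 1, (x : Cn (m+1)) ∈ PNset m ∧ p = Sum.inr x) := by
  obtain ⟨w, hw, rfl⟩ := realPtsN_subset m hp
  rw [phiD_eq]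
  by_cases h : ‖(w : Cn (m+1))‖ < 1
  · left
    refine ⟨(1 - ‖(w : Cn (m+1))‖)⁻¹ • (w : Cn (m+1)), PNsmul m _ _ hw, ?_⟩
    unfold psi
    rw [dif_pos h]
  · right
    refine ⟨⟨(w : Cn (m+1)), mem_sphere_zero_iff_norm.mpr
      (le_antisymm (mem_closedBall_zero_iff.mp w.2) (not_lt.mp h))⟩, hw, ?_⟩
    unfold psi
    rw [dif_neg h]

lemma inl_mem_realPtsN {m : ℕ} {z : Cn (m+1)} (hz : z ∈ PNset m) :
    (Sum.inl z : DE (m+1)) ∈ realPtsN m :=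
  subset_closure ⟨z, hz, rfl⟩

lemma inr_mem_realPtsN {m : ℕ} {x : Metric.sphere (0 : Cn (m+1)) 1}
    (hx : (x : Cn (m+1)) ∈ PNset m) : (Sum.inr x : DE (m+1)) ∈ realPtsN m := by
  have hx1 : ‖(x : Cn (m+1))‖ = 1 := mem_sphere_zero_iff_norm.mp x.2
  have hmem : (x : Cn (m+1)) ∈ Metric.closedBall (0 : Cn (m+1)) 1 := by
    rw [mem_closedBall_zero_iff, hx1]
  set S : Set (Metric.closedBall (0 : Cn (m+1)) 1) :=
    {w | ‖(w : Cn (m+1))‖ < 1 ∧ (w : Cn (m+1)) ∈ PNset m} with hS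
  have h1 : (Sum.inr x : DE (m+1)) = phiD (m+1) ⟨(x : Cn (m+1)), hmem⟩ := by
    unfold phiD
    rw [dif_neg (by show ¬ ‖(x : Cn (m+1))‖ < 1; rw [hx1]; exact lt_irrefl 1)]
  have h2 : (⟨(x : Cn (m+1)), hmem⟩ : Metric.closedBall (0 : Cn (m+1)) 1) ∈ closure S := by
    rw [closure_subtype]
    refine closure_mono ?_ (mem_closure_ball_inter (PNsmul m) hx1.le hx)
    rintro w ⟨hw1, hw2⟩
    exact ⟨⟨w, by rw [mem_closedBall_zero_iff]; exact hw1.le⟩, ⟨hw1, hw2⟩, rfl⟩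
  have h3 : phiD (m+1) '' S ⊆ Sum.inl '' {z : Cn (m+1) | ∀ i, (z i).im = 0} := by
    rintro _ ⟨w, ⟨hw1, hw2⟩, rfl⟩
    unfold phiD
    rw [dif_pos hw1]
    exact ⟨_, PNsmul m _ _ hw2, rfl⟩
  rw [h1]
  exact closure_mono h3
    (image_closure_subset_closure_image (phiD_continuous (m+1)) ⟨_, h2, rfl⟩)

/-! ### Characterization of `realPtsC` -/

lemma realPtsC_subset :
    realPtsC ⊆ phiDC '' {w : Metric.closedBall (0 : ℂ) 1 | (w : ℂ) ∈ PCset} := by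
  apply closure_minimal
  · rintro _ ⟨z, hz, rfl⟩
    rw [phiDC_eq]
    exact psi_inl_mem_image PCsmul hz
  · exact phiDC_closedMap (PCclosed.preimage continuous_subtype_val)

lemma realPtsC_cases {p : DC} (hp : p ∈ realPtsC) :
    (∃ a : ℂ, a.im = 0 ∧ p = Sum.inl a) ∨
    (∃ c : Metric.sphere (0 : ℂ) 1, (c : ℂ).im = 0 ∧ p = Sum.inr c) := by
  obtain ⟨w, hw, rfl⟩ := realPtsC_subset hp
  rw [phiDC_eq]
  by_cases h : ‖(w : ℂ)‖ < 1
  · left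
    refine ⟨(1 - ‖(w : ℂ)‖)⁻¹ • (w : ℂ), PCsmul _ _ hw, ?_⟩
    unfold psi
    rw [dif_pos h]
  · right
    refine ⟨⟨(w : ℂ), mem_sphere_zero_iff_norm.mpr
      (le_antisymm (mem_closedBall_zero_iff.mp w.2) (not_lt.mp h))⟩, hw, ?_⟩
    unfold psi
    rw [dif_neg h]

lemma inl_mem_realPtsC {a : ℂ} (ha : a.im = 0) : (Sum.inl a : DC) ∈ realPtsC :=
  subset_closure ⟨a, ha, rfl⟩

lemma inr_mem_realPtsC {c : Metric.sphere (0 : ℂ) 1} (hc : (c : ℂ).im = 0) :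
    (Sum.inr c : DC) ∈ realPtsC := by
  have hc1 : ‖(c : ℂ)‖ = 1 := mem_sphere_zero_iff_norm.mp c.2
  have hmem : (c : ℂ) ∈ Metric.closedBall (0 : ℂ) 1 := by
    rw [mem_closedBall_zero_iff, hc1]
  set S : Set (Metric.closedBall (0 : ℂ) 1) :=
    {w | ‖(w : ℂ)‖ < 1 ∧ (w : ℂ) ∈ PCset} with hS
  have h1 : (Sum.inr c : DC) = phiDC ⟨(c : ℂ), hmem⟩ := by
    unfold phiDC
    rw [dif_neg (by show ¬ ‖(c : ℂ)‖ < 1; rw [hc1]; exact lt_irrefl 1)]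
  have h2 : (⟨(c : ℂ), hmem⟩ : Metric.closedBall (0 : ℂ) 1) ∈ closure S := by
    rw [closure_subtype]
    refine closure_mono ?_ (mem_closure_ball_inter PCsmul hc1.le hc)
    rintro w ⟨hw1, hw2⟩
    exact ⟨⟨w, by rw [mem_closedBall_zero_iff]; exact hw1.le⟩, ⟨hw1, hw2⟩, rfl⟩
  have h3 : phiDC '' S ⊆ Sum.inl '' {z : ℂ | z.im = 0} := by
    rintro _ ⟨w, ⟨hw1, hw2⟩, rfl⟩
    unfold phiDC
    rw [dif_pos hw1]
    exact ⟨_, PCsmul _ _ hw2, rfl⟩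
  rw [h1]
  exact closure_mono h3 (image_closure_subset_closure_image phiDC_continuous ⟨_, h2, rfl⟩)

/-! ### The closure of the hyperplane -/

lemma closure_Hhyp_subset (m : ℕ) :
    closure (Hhyp m) ⊆
      phiD (m+1) '' {w : Metric.closedBall (0 : Cn (m+1)) 1 | (w : Cn (m+1)) 0 = 0} := by
  apply closure_minimal
  · rintro _ ⟨z, hz0, rfl⟩
    rw [phiD_eq]
    refine psi_inl_mem_image (P := {z : Cn (m+1) | z 0 = 0}) ?_ hz0
    intro t w hw
    show (t • w) 0 = 0
    have : (t • w) 0 = t • (w 0) := rfl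
    rw [this, hw, smul_zero]
  · exact phiD_closedMap _ (isClosed_eq
      ((EuclideanSpace.proj (0 : Fin (m+1))).continuous.comp continuous_subtype_val)
      continuous_const)

lemma not_mem_closure_Hhyp_inl {m : ℕ} {z : Cn (m+1)} (hz : z 0 ≠ 0) :
    (Sum.inl z : DE (m+1)) ∉ closure (Hhyp m) := by
  intro h
  obtain ⟨w, hw0, heq⟩ := closure_Hhyp_subset m h
  rw [phiD_eq] at heq
  obtain ⟨hlt, hv⟩ := psi_inl_elim heq
  apply hz
  rw [hv]
  have : ((1 - ‖(w : Cn (m+1))‖)⁻¹ • (w : Cn (m+1))) 0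
      = (1 - ‖(w : Cn (m+1))‖)⁻¹ • ((w : Cn (m+1)) 0) := rfl
  rw [this, hw0, smul_zero]

lemma not_mem_closure_Hhyp_inr {m : ℕ} {x : Metric.sphere (0 : Cn (m+1)) 1}
    (hx : (x : Cn (m+1)) 0 ≠ 0) : (Sum.inr x : DE (m+1)) ∉ closure (Hhyp m) := by
  intro h
  obtain ⟨w, hw0, heq⟩ := closure_Hhyp_subset m h
  rw [phiD_eq] at heq
  obtain ⟨-, hv⟩ := psi_inr_elim heq
  apply hx
  rw [hv, hw0]

/-- The homeomorphism `Φ̂` maps `(closure of ℝⁿ in 𝔻_{ℂⁿ}) ∖ closure({z₁ = 0})`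
onto `(ℝ̄ ∖ {0}) × ℝ^{n-1}`. -/
theorem PhiHat_real_image (m : ℕ)
    (Φhat : {p : DE (m + 1) // p ∉ closure (Hhyp m)} ≃ₜ
        ({q : DC // q ≠ Sum.inl 0} × (Fin m → ℂ)))
    (h1 : ∀ (z : Cn (m + 1)) (hz : (Sum.inl z : DE (m + 1)) ∉ closure (Hhyp m)),
        ((Φhat ⟨Sum.inl z, hz⟩).1 : DC) = Sum.inl (z 0) ∧
        (Φhat ⟨Sum.inl z, hz⟩).2 = fun i => z i.succ / z 0)
    (h2 : ∀ (x : Metric.sphere (0 : Cn (m + 1)) 1)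
          (hx : (Sum.inr x : DE (m + 1)) ∉ closure (Hhyp m)),
        (∃ c : Metric.sphere (0 : ℂ) 1,
          ((Φhat ⟨Sum.inr x, hx⟩).1 : DC) = Sum.inr c ∧
          (c : ℂ) = (x : Cn (m + 1)) 0 / (‖(x : Cn (m + 1)) 0‖ : ℂ)) ∧
        (Φhat ⟨Sum.inr x, hx⟩).2 =
          fun i => (x : Cn (m + 1)) i.succ / (x : Cn (m + 1)) 0) :
    (⇑Φhat) '' {p | (p : DE (m + 1)) ∈ realPtsN m} =
      {q | ((q.1 : DC) ∈ realPtsC) ∧ ∀ i, (q.2 i).im = 0} := by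
  ext q
  simp only [Set.mem_image, Set.mem_setOf_eq]
  constructor
  · rintro ⟨⟨pv, hpnot⟩, hp, rfl⟩
    simp only [Set.mem_setOf_eq] at hp
    rcases realPtsN_cases hp with ⟨z, hz, rfl⟩ | ⟨x, hx, rfl⟩
    · obtain ⟨ha, hb⟩ := h1 z hpnot
      constructor
      · rw [ha]
        exact inl_mem_realPtsC (hz 0)
      · intro i
        rw [hb]
        simp [Complex.div_im, hz i.succ, hz 0]
    · obtain ⟨⟨c, hc1, hc2⟩, hb⟩ := h2 x hpnot
      constructor
      · rw [hc1]
        apply inr_mem_realPtsC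
        rw [hc2]
        simp [Complex.div_im, hx 0]
      · intro i
        rw [hb]
        simp [Complex.div_im, hx i.succ, hx 0]
  · rintro ⟨hq1, hq2⟩
    rcases realPtsC_cases hq1 with ⟨a, ha, hqa⟩ | ⟨c, hc, hqc⟩
    · have hane0 : a ≠ 0 := by
        intro h
        exact q.1.2 (by rw [hqa, h])
      set z : Cn (m+1) := WithLp.toLp 2 (Fin.cons a (fun i => a * q.2 i) : Fin (m+1) → ℂ) with hzdef
      have hz0 : z 0 = a := rfl
      have hzs : ∀ i : Fin m, z i.succ = a * q.2 i := fun i =>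
        Fin.cons_succ (α := fun _ : Fin (m+1) => ℂ) a (fun j => a * q.2 j) i
      have hzreal : z ∈ PNset m := by
        intro i
        refine Fin.cases ?_ (fun j => ?_) i
        · rw [hz0]; exact ha
        · rw [hzs j]
          simp [Complex.mul_im, ha, hq2 j]
      have hnot : (Sum.inl z : DE (m+1)) ∉ closure (Hhyp m) :=
        not_mem_closure_Hhyp_inl (by rw [hz0]; exact hane0)
      refine ⟨⟨Sum.inl z, hnot⟩, inl_mem_realPtsN hzreal, ?_⟩
      obtain ⟨HA, HB⟩ := h1 z hnot
      refine Prod.ext ?_ ?_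
      · apply Subtype.ext
        rw [HA, hz0, hqa]
      · rw [HB]
        funext i
        rw [hzs i, hz0]
        exact mul_div_cancel_left₀ _ hane0
    · have hcabs : ‖(c : ℂ)‖ = 1 := by
        have := mem_sphere_zero_iff_norm.mp c.2
        exact this
      have hcne : (c : ℂ) ≠ 0 := by
        intro h
        rw [h] at hcabs
        simp at hcabs
      set w : Cn (m+1) := WithLp.toLp 2 (Fin.cons (c : ℂ) (fun i => (c : ℂ) * q.2 i) : Fin (m+1) → ℂ) with hwdef
      have hw0 : w 0 = (c : ℂ) := rfl
      have hws : ∀ i : Fin m, w i.succ = (c : ℂ) * q.2 i := fun i =>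
        Fin.cons_succ (α := fun _ : Fin (m+1) => ℂ) (c : ℂ) (fun j => (c : ℂ) * q.2 j) i
      have hwne : w ≠ 0 := by
        intro h
        apply hcne
        rw [← hw0, h]
        rfl
      set r : ℝ := ‖w‖ with hrdef
      have hr : 0 < r := norm_pos_iff.mpr hwne
      have hrne : (r : ℂ) ≠ 0 := by
        simp [Complex.ofReal_ne_zero, hr.ne']
      set x : Cn (m+1) := r⁻¹ • w with hxdef
      have hxapp : ∀ i, x i = (r⁻¹ : ℝ) • (w i) := fun i => rfl
      have hxnorm : ‖x‖ = 1 := by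
        rw [hxdef, norm_smul, Real.norm_eq_abs, abs_of_nonneg (by positivity),
          ← hrdef, inv_mul_cancel₀ hr.ne']
      have hx0 : x 0 = (r⁻¹ : ℂ) * (c : ℂ) := by
        rw [hxapp 0, hw0, Complex.real_smul, Complex.ofReal_inv]
      have hxs : ∀ i : Fin m, x i.succ = (r⁻¹ : ℂ) * ((c : ℂ) * q.2 i) := by
        intro i
        rw [hxapp i.succ, hws i, Complex.real_smul, Complex.ofReal_inv]
      have hrinvne : ((r : ℂ))⁻¹ ≠ 0 := inv_ne_zero hrne
      have hx0ne : x 0 ≠ 0 := by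
        rw [hx0]
        exact mul_ne_zero (inv_ne_zero hrne) hcne
      set xS : Metric.sphere (0 : Cn (m+1)) 1 :=
        ⟨x, mem_sphere_zero_iff_norm.mpr hxnorm⟩ with hxSdef
      have hnot : (Sum.inr xS : DE (m+1)) ∉ closure (Hhyp m) :=
        not_mem_closure_Hhyp_inr hx0ne
      have hxreal : (xS : Cn (m+1)) ∈ PNset m := by
        intro i
        refine Fin.cases ?_ (fun j => ?_) i
        · show (x 0).im = 0
          rw [hx0]
          simp [Complex.mul_im, hc]
        · show (x j.succ).im = 0
          rw [hxs j]
          simp [Complex.mul_im, hc, hq2 j]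
      refine ⟨⟨Sum.inr xS, hnot⟩, inr_mem_realPtsN hxreal, ?_⟩
      obtain ⟨⟨c', hc'1, hc'2⟩, HB⟩ := h2 xS hnot
      have habs : (‖(xS : Cn (m+1)) 0‖ : ℂ) = (r : ℂ)⁻¹ := by
        show (‖x 0‖ : ℂ) = (r : ℂ)⁻¹
        rw [hx0, norm_mul, hcabs, mul_one, norm_inv, Complex.norm_real, Real.norm_eq_abs,
          abs_of_nonneg hr.le, Complex.ofReal_inv]
      have hc'c : (c' : ℂ) = (c : ℂ) := by
        rw [hc'2, habs]
        show ((xS : Cn (m+1)) 0) / (r : ℂ)⁻¹ = (c : ℂ)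
        show (x 0) / (r : ℂ)⁻¹ = (c : ℂ)
        rw [hx0]
        field_simp
      refine Prod.ext ?_ ?_
      · apply Subtype.ext
        rw [hc'1, hqc]
        congr 1
        exact Subtype.ext hc'c
      · rw [HB]
        funext i
        show (xS : Cn (m+1)) i.succ / (xS : Cn (m+1)) 0 = q.2 i
        show x i.succ / x 0 = q.2 i
        rw [hxs i, hx0, ← mul_assoc]
        exact mul_div_cancel_left₀ _ (mul_ne_zero (inv_ne_zero hrne) hcne)
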